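/- Two m-ary trees of the same arity are equal if and only if their path sequences are equal, where the path sequence records for each leaf (in left-to-right order) the length of the path from the root to that leaf. -/

import Mathlib

/-- An `m`-ary (rooted plane) tree: every node has either no children (a leaf)
or exactly `m` children (an internal node). -/
inductive MTree (m : ℕ) : Type
  | leaf : MTree m
  | node : (Fin m → MTree m) → MTree m

namespace MTree

variable {m : ℕ}

/-- The arity: the number of leaves. -/
def leaves : MTree m → ℕ
  | .leaf => 1
  | .node c => ∑ j, (c j).leaves

/-- The weight: the number of internal nodes. -/
def weight : MTree m → ℕ
  | .leaf => 0
  | .node c => 1 + ∑ j, (c j).weight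

/-- `p.comp i q` is the partial composition `p ∘ᵢ q`: the tree obtained by
identifying leaf `i` of `p` (leaves numbered `1, …, leaves p` from left to
right) with the root of `q`. -/
def comp : MTree m → ℕ → MTree m → MTree m
  | .leaf, i, q => if i = 1 then q else .leaf
  | .node c, i, q => .node fun j => (c j).comp (i - ∑ k, if k < j then (c k).leaves else 0) q

/-- The path sequence: the list of root-to-leaf path lengths, with leaves taken
in left-to-right order. -/
def pathSeq : MTree m → List ℕ
  | .leaf => [0]
  | .node c => (List.ofFn fun j => ((c j).pathSeq).map (· + 1)).flatten

/-- The basic `m`-ary tree: the unique tree with one internal node. -/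
def basic (m : ℕ) : MTree m := .node fun _ => .leaf

end MTree

namespace MTree

variable {m : ℕ}

lemma length_pathSeq (t : MTree m) : t.pathSeq.length = t.leaves := by
  induction t with
  | leaf => rfl
  | node c ih =>
    simp [pathSeq, leaves, List.length_flatten, List.map_ofFn, Function.comp_def,
      List.sum_ofFn, ih]

lemma leaves_pos (hm : 0 < m) (t : MTree m) : 0 < t.leaves := by
  induction t with
  | leaf => exact Nat.one_pos
  | node c ih =>
    exact Finset.sum_pos (fun j _ => ih j)
      (Finset.univ_nonempty_iff.mpr ⟨⟨0, hm⟩⟩)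

lemma pos_of_mem_node (c : Fin m → MTree m) {x : ℕ}
    (hx : x ∈ (MTree.node c).pathSeq) : 0 < x := by
  simp only [pathSeq, List.mem_flatten, List.mem_ofFn] at hx
  obtain ⟨l, ⟨j, rfl⟩, hxl⟩ := hx
  obtain ⟨y, _, rfl⟩ := List.mem_map.mp hxl
  omega

lemma keyList (d : ℕ) : ∀ (L M : List (MTree m)) (r s : List ℕ),
    (∀ p ∈ L, ∀ (d : ℕ) (q : MTree m) (r s : List ℕ),
        p.pathSeq.map (· + d) ++ r = q.pathSeq.map (· + d) ++ s → p = q ∧ r = s) →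
    L.length = M.length →
    (L.map fun t => t.pathSeq.map (· + d)).flatten ++ r
      = (M.map fun t => t.pathSeq.map (· + d)).flatten ++ s →
    L = M ∧ r = s := by
  intro L
  induction L with
  | nil =>
    intro M r s _ hlen h
    cases M with
    | nil => simpa using h
    | cons _ _ => simp at hlen
  | cons p L ihL =>
    intro M r s H hlen h
    cases M with
    | nil => simp at hlen
    | cons q M =>
      simp only [List.map_cons, List.flatten_cons, List.append_assoc] at h
      obtain ⟨rfl, h2⟩ := H p (by simp) d q _ _ h
      obtain ⟨rfl, rfl⟩ := ihL M r s (fun p hp => H p (by simp [hp]))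
        (by simpa using hlen) h2
      exact ⟨rfl, rfl⟩

lemma key (hm : 0 < m) (p : MTree m) : ∀ (d : ℕ) (q : MTree m) (r s : List ℕ),
    p.pathSeq.map (· + d) ++ r = q.pathSeq.map (· + d) ++ s → p = q ∧ r = s := by
  induction p with
  | leaf =>
    intro d q r s hq
    cases q with
    | leaf => simpa [pathSeq] using hq
    | node e =>
      exfalso
      have hne : (MTree.node e).pathSeq ≠ [] :=
        List.ne_nil_of_length_pos (by rw [length_pathSeq]; exact leaves_pos hm _)
      obtain ⟨a, l, hal⟩ := List.exists_cons_of_ne_nil hne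
      have ha : 0 < a := pos_of_mem_node e (by rw [hal]; exact List.mem_cons_self)
      rw [hal] at hq
      simp [pathSeq] at hq
      omega
  | node c ih =>
    intro d q r s hq
    cases q with
    | leaf =>
      exfalso
      have hne : (MTree.node c).pathSeq ≠ [] :=
        List.ne_nil_of_length_pos (by rw [length_pathSeq]; exact leaves_pos hm _)
      obtain ⟨a, l, hal⟩ := List.exists_cons_of_ne_nil hne
      have ha : 0 < a := pos_of_mem_node c (by rw [hal]; exact List.mem_cons_self)
      rw [hal] at hq
      simp [pathSeq] at hq
      omega
    | node e =>
      have hmm : ∀ (f : Fin m → MTree m),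
          ((MTree.node f).pathSeq).map (· + d)
            = ((List.ofFn f).map fun t => t.pathSeq.map (· + (d + 1))).flatten := by
        intro f
        simp only [pathSeq, List.map_flatten, List.map_ofFn, List.map_map,
          Function.comp_def]
        have hfun : (fun x => x + 1 + d) = (fun x : ℕ => x + (d + 1)) :=
          funext fun x => by omega
        rw [hfun]
      rw [hmm c, hmm e] at hq
      have hlen : (List.ofFn c).length = (List.ofFn e).length := by simp
      have H : ∀ p ∈ List.ofFn c, ∀ (d : ℕ) (q : MTree m) (r s : List ℕ),
          p.pathSeq.map (· + d) ++ r = q.pathSeq.map (· + d) ++ s → p = q ∧ r = s := by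
        intro p hp
        obtain ⟨j, rfl⟩ := List.mem_ofFn.mp hp
        exact ih j
      obtain ⟨hce, hrs⟩ := keyList (d + 1) (List.ofFn c) (List.ofFn e) r s H hlen hq
      exact ⟨by rw [List.ofFn_injective hce], hrs⟩

end MTree

theorem mary_tree_eq_iff_pathSeq_eq {m : ℕ} (p q : MTree m)
    (h : p.leaves = q.leaves) :
    p = q ↔ p.pathSeq = q.pathSeq := by
  constructor
  · rintro rfl; rfl
  · intro hps
    rcases Nat.eq_zero_or_pos m with hm | hm
    · subst hm
      cases p with
      | leaf =>
        cases q with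
        | leaf => rfl
        | node e => simp [MTree.leaves] at h
      | node c =>
        cases q with
        | leaf => simp [MTree.leaves] at h
        | node e => exact congrArg MTree.node (funext fun j => j.elim0)
    · have h0 : p.pathSeq.map (· + 0) ++ [] = q.pathSeq.map (· + 0) ++ [] := by
        simp [hps]
      exact (MTree.key hm p 0 q [] [] h0).1
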